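/- Let X be a zero-dimensional T1 space such that X = ⋃_{n∈ℕ} S_n where, for every n ∈ ℕ, the subspace S_n is ℕ-compact and c_δ-embedded in X (that is, for every A ∈ CO_δ(S_n) there exists B ∈ CO_δ(X) with A = B ∩ S_n). Then X is ℕ-compact. -/

import Mathlib

open Topology TopologicalSpace Set

universe u

/-- `X` is `E`-compact if it is homeomorphic to a closed subspace of a power `E^J`
for some nonempty index set `J`. -/
def IsECompact (E : Type*) (X : Type u)
    [TopologicalSpace E] [TopologicalSpace X] : Prop :=
  ∃ (J : Type u) (_ : Nonempty J) (e : X → J → E),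
    IsEmbedding e ∧ IsClosed (Set.range e)

/-- `A ∈ CO_δ(X)`: `A` is the intersection of a nonempty countable family of clopen
subsets of `X`. -/
def MemCOdelta {X : Type*} [TopologicalSpace X] (A : Set X) : Prop :=
  ∃ 𝒞 : Set (Set X), 𝒞.Countable ∧ 𝒞.Nonempty ∧ (∀ C ∈ 𝒞, IsClopen C) ∧ A = ⋂₀ 𝒞

-- Auxiliary: indicator of a clopen set as a continuous map to ℕ.
lemma exists_clopen_indicator {X : Type u} [TopologicalSpace X] (C : Set X) (hC : IsClopen C) :
    ∃ f : C(X, ℕ), (∀ x ∈ C, f x = 0) ∧ (∀ x ∉ C, f x = 1) := by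
  classical
  refine ⟨⟨fun x => if x ∈ C then 0 else 1, ?_⟩,
    fun x hx => if_pos hx, fun x hx => if_neg hx⟩
  rw [continuous_def]
  intro s _
  have h : (fun x => if x ∈ C then (0:ℕ) else 1) ⁻¹' s
      = ((if (0:ℕ) ∈ s then C else ∅) ∪ (if (1:ℕ) ∈ s then Cᶜ else ∅)) := by
    ext x
    by_cases hx : x ∈ C <;> by_cases h0 : (0:ℕ) ∈ s <;> by_cases h1 : (1:ℕ) ∈ s <;>
      simp [hx, h0, h1]
  rw [h]
  apply IsOpen.union <;> split_ifs <;>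
    first
      | exact hC.2
      | exact hC.compl.2
      | exact isOpen_empty


/-- Let `X` be a zero-dimensional `T₁` space which is a countable union of
subspaces `Sₙ`, each `ℕ`-compact and `c_δ`-embedded in `X` (every member of
`CO_δ(Sₙ)` is the trace on `Sₙ` of a member of `CO_δ(X)`).  Then `X` is
`ℕ`-compact. -/
theorem stmt12 {X : Type u} [TopologicalSpace X] [T1Space X]
    (hzd : IsTopologicalBasis {s : Set X | IsClopen s})
    (S : ℕ → Set X) (hcover : ⋃ n, S n = Set.univ)
    (hn : ∀ n, IsECompact ℕ ↥(S n))
    (hc : ∀ n, ∀ A : Set ↥(S n), MemCOdelta A →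
      ∃ B : Set X, MemCOdelta B ∧ A = Subtype.val ⁻¹' B) :
    IsECompact ℕ X := by
  classical
  set e : X → C(X, ℕ) → ℕ := fun x f => f x with he
  have hcont : Continuous e := continuous_pi fun f => f.continuous
  refine ⟨C(X, ℕ), ⟨ContinuousMap.const X 0⟩, e, ⟨?_, ?_⟩, ?_⟩
  · -- inducing
    rw [isInducing_iff_nhds]
    intro x
    refine le_antisymm ((hcont.tendsto x).le_comap) ?_
    intro Uu hUu
    obtain ⟨O, hOU, hOopen, hxO⟩ := mem_nhds_iff.mp hUu
    obtain ⟨Cc, hCc, hxC, hCO⟩ := hzd.exists_subset_of_mem_open hxO hOopen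
    obtain ⟨f, hf0, hf1⟩ := exists_clopen_indicator Cc hCc
    rw [Filter.mem_comap]
    refine ⟨(fun r => r f) ⁻¹' ({0} : Set ℕ), ?_, ?_⟩
    · exact IsOpen.mem_nhds ((isOpen_discrete _).preimage (continuous_apply f))
        (by simpa [e] using hf0 x hxC)
    · intro y hy
      simp only [Set.mem_preimage, Set.mem_singleton_iff, e] at hy
      have hyC : y ∈ Cc := by
        by_contra hyc
        rw [hf1 y hyc] at hy
        exact one_ne_zero hy
      exact hOU (hCO hyC)
  · -- injective
    intro x y hxy
    by_contra hne
    have hxmem : x ∈ ({y}ᶜ : Set X) := by simpa using hne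
    obtain ⟨Cc, hCc, hxC, hCO⟩ := hzd.exists_subset_of_mem_open hxmem
      isClosed_singleton.isOpen_compl
    obtain ⟨f, hf0, hf1⟩ := exists_clopen_indicator Cc hCc
    have h1 : f x = 0 := hf0 x hxC
    have h2 : f y = 1 := hf1 y (fun hy => (hCO hy) rfl)
    have h3 : f x = f y := congrFun hxy f
    rw [h1, h2] at h3
    exact zero_ne_one h3
  · -- closed range
    apply isClosed_of_closure_subset
    intro p hp
    -- Every finite set of coordinates of `p` is realized by a point of `X`.
    have FIN : ∀ γ : Finset C(X, ℕ), ∃ x : X, ∀ f ∈ γ, f x = p f := by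
      intro γ
      have hV : IsOpen ((↑γ : Set C(X, ℕ)).pi fun f => ({p f} : Set ℕ)) :=
        isOpen_set_pi γ.finite_toSet fun i _ => isOpen_discrete _
      have hpV : p ∈ (↑γ : Set C(X, ℕ)).pi fun f => ({p f} : Set ℕ) := fun f _ => rfl
      obtain ⟨r, hro, x, rfl⟩ := mem_closure_iff.mp hp _ hV hpV
      exact ⟨x, fun f hf => hro f hf⟩
    -- The "σ-ultrafilter" determined by p.
    set U : Set (Set X) := {C | ∃ f : C(X, ℕ), C = f ⁻¹' {p f}} with hUdef
    have memU_clopen : ∀ C ∈ U, IsClopen C := by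
      rintro C ⟨f, rfl⟩
      exact (isClopen_discrete _).preimage f.continuous
    have hFmem : ∀ f : C(X, ℕ), f ⁻¹' {p f} ∈ U := fun f => ⟨f, rfl⟩
    have hunivU : Set.univ ∈ U := by
      obtain ⟨x, hx⟩ := FIN {ContinuousMap.const X 0}
      have h0 : p (ContinuousMap.const X 0) = 0 :=
        (hx _ (Finset.mem_singleton_self _)).symm
      refine ⟨ContinuousMap.const X 0, ?_⟩
      ext y
      simp only [Set.mem_univ, Set.mem_preimage, ContinuousMap.const_apply, h0,
        Set.mem_singleton_iff]
    have hUor : ∀ C : Set X, IsClopen C → C ∈ U ∨ Cᶜ ∈ U := by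
      intro C hC
      obtain ⟨f, hf0, hf1⟩ := exists_clopen_indicator C hC
      obtain ⟨x, hx⟩ := FIN {f}
      have hx : f x = p f := hx f (Finset.mem_singleton_self f)
      by_cases hxc : x ∈ C
      · left
        refine ⟨f, ?_⟩
        have hp0 : p f = 0 := hx ▸ hf0 x hxc
        ext y
        simp only [Set.mem_preimage, Set.mem_singleton_iff, hp0]
        constructor
        · exact fun hy => hf0 y hy
        · intro hy
          by_contra hyc
          rw [hf1 y hyc] at hy
          exact one_ne_zero hy
      · right
        refine ⟨f, ?_⟩
        have hp1 : p f = 1 := hx ▸ hf1 x hxc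
        ext y
        simp only [Set.mem_compl_iff, Set.mem_preimage, Set.mem_singleton_iff, hp1]
        constructor
        · exact fun hy => hf1 y hy
        · intro hy hyc
          rw [hf0 y hyc] at hy
          exact zero_ne_one hy
    -- countable intersection property
    have CIP : ∀ C : ℕ → Set X, (∀ i, C i ∈ U) → (⋂ i, C i).Nonempty := by
      intro C hCU
      have hCUe : ∀ i, ∃ f : C(X, ℕ), C i = f ⁻¹' {p f} := hCU
      choose fw hfw using hCUe
      by_contra hemp
      rw [Set.not_nonempty_iff_eq_empty] at hemp
      have hex : ∀ x : X, ∃ i, x ∉ C i := by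
        intro x
        by_contra h
        push_neg at h
        have : x ∈ ⋂ i, C i := Set.mem_iInter.mpr h
        rw [hemp] at this
        exact this
      set g : X → ℕ := fun x => Nat.find (hex x) with hgdef
      have hfiber : ∀ m : ℕ, {x : X | g x = m} = (C m)ᶜ ∩ ⋂ k ∈ Finset.range m, C k := by
        intro m
        ext x
        simp only [Set.mem_setOf_eq, hgdef, Nat.find_eq_iff, Set.mem_inter_iff,
          Set.mem_compl_iff, Set.mem_iInter, Finset.mem_range, not_not]
      have hfiber_open : ∀ m : ℕ, IsOpen {x : X | g x = m} := by
        intro m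
        rw [hfiber m]
        exact ((memU_clopen _ (hCU m)).compl.2).inter
          (isOpen_biInter_finset fun k _ => (memU_clopen _ (hCU k)).2)
      have hgcont : Continuous g := by
        rw [continuous_def]
        intro s _
        have : g ⁻¹' s = ⋃ m ∈ s, {x : X | g x = m} := by
          ext x
          simp [eq_comm]
        rw [this]
        exact isOpen_biUnion fun m _ => hfiber_open m
      set gc : C(X, ℕ) := ⟨g, hgcont⟩ with hgcdef
      set m : ℕ := p gc with hmdef
      obtain ⟨x, hx⟩ := FIN (insert gc ((Finset.range (m + 1)).image fw))
      have hgx : g x = m := hx gc (Finset.mem_insert_self _ _)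
      have hxC : ∀ i ≤ m, x ∈ C i := by
        intro i hi
        have hmem : fw i ∈ insert gc ((Finset.range (m + 1)).image fw) :=
          Finset.mem_insert_of_mem (Finset.mem_image_of_mem fw
            (Finset.mem_range.mpr (Nat.lt_succ_of_le hi)))
        have := hx (fw i) hmem
        rw [hfw i]
        exact this
      have : x ∉ C (g x) := Nat.find_spec (hex x)
      rw [hgx] at this
      exact this (hxC m le_rfl)
    -- choose n₀ such that S n₀ meets every countable intersection of members of U
    have hstar : ∃ m, ∀ D : ℕ → Set X, (∀ i, D i ∈ U) → ∃ x ∈ S m, ∀ i, x ∈ D i := by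
      by_contra h
      push_neg at h
      choose D hDU hDS using h
      obtain ⟨x, hx⟩ := CIP (fun m => D m.unpair.1 m.unpair.2) (fun m => hDU _ _)
      rw [Set.mem_iInter] at hx
      have hxS : x ∈ ⋃ n, S n := hcover ▸ Set.mem_univ x
      obtain ⟨m, hm⟩ := Set.mem_iUnion.mp hxS
      obtain ⟨i, hi⟩ := hDS m x hm
      have := hx (Nat.pair m i)
      rw [Nat.unpair_pair] at this
      exact hi this
    obtain ⟨n₀, hn₀⟩ := hstar
    obtain ⟨Jn, hJne, en, hen_emb, hen_closed⟩ := hn n₀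
    set g : Jn → ↥(S n₀) → ℕ := fun j s => en s j with hgdef
    have hgc : ∀ j, Continuous (g j) := fun j => (continuous_apply j).comp hen_emb.continuous
    -- trace fibers come from CO_δ sets of X
    have hBex : ∀ (j : Jn) (k : ℕ), ∃ Cf : ℕ → Set X, (∀ i, IsClopen (Cf i)) ∧
        (Subtype.val ⁻¹' (⋂ i, Cf i) : Set ↥(S n₀)) = g j ⁻¹' {k} := by
      intro j k
      have hmem : MemCOdelta (g j ⁻¹' ({k} : Set ℕ)) := by
        refine ⟨{g j ⁻¹' {k}}, Set.countable_singleton _, ⟨_, rfl⟩, ?_, (Set.sInter_singleton _).symm⟩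
        rintro C rfl
        exact (isClopen_discrete _).preimage (hgc j)
      obtain ⟨B, ⟨𝒞, h𝒞c, h𝒞ne, h𝒞cl, rfl⟩, hBeq⟩ := hc n₀ _ hmem
      obtain ⟨Cf, hCfr⟩ := h𝒞c.exists_eq_range h𝒞ne
      refine ⟨Cf, fun i => h𝒞cl _ (hCfr ▸ ⟨i, rfl⟩), ?_⟩
      rw [← Set.sInter_range, ← hCfr]
      exact hBeq.symm
    choose Cf hCfclopen hCfeq using hBex
    -- the candidate limit point coordinates
    have hqex : ∀ j : Jn, ∃ k : ℕ, ∀ i, Cf j k i ∈ U := by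
      intro j
      by_contra h
      push_neg at h
      choose iw hiw using h
      have hD : ∀ k, (Cf j k (iw k))ᶜ ∈ U := fun k =>
        (hUor _ (hCfclopen j k (iw k))).resolve_left (hiw k)
      obtain ⟨x, hxS, hx⟩ := hn₀ (fun k => (Cf j k (iw k))ᶜ) hD
      set s : ↥(S n₀) := ⟨x, hxS⟩ with hsdef
      have hs : s ∈ g j ⁻¹' {g j s} := rfl
      rw [← hCfeq j (g j s)] at hs
      have hs2 : (s : X) ∈ ⋂ i, Cf j (g j s) i := hs
      exact (hx (g j s)) (Set.mem_iInter.mp hs2 (iw (g j s)))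
    choose q hq using hqex
    -- doubly-indexed version of hn₀
    have star2 : ∀ A : ℕ → ℕ → Set X, (∀ a b, A a b ∈ U) →
        ∃ x ∈ S n₀, ∀ a b, x ∈ A a b := by
      intro A hA
      obtain ⟨x, hxS, hx⟩ := hn₀ (fun m => A m.unpair.1 m.unpair.2) (fun m => hA _ _)
      refine ⟨x, hxS, fun a b => ?_⟩
      have := hx (Nat.pair a b)
      rwa [Nat.unpair_pair] at this
    -- key meeting lemma
    have Mfin : ∀ E : ℕ → Set X, (∀ b, E b ∈ U) → ∀ γ : Finset Jn,
        ∃ s : ↥(S n₀), (∀ b, (s : X) ∈ E b) ∧ ∀ j ∈ γ, g j s = q j := by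
      intro E hE γ
      rcases γ.eq_empty_or_nonempty with rfl | ⟨j₀, hj₀⟩
      · obtain ⟨x, hxS, hx⟩ := hn₀ E hE
        exact ⟨⟨x, hxS⟩, hx, by simp⟩
      · set L := γ.toList with hLdef
        set idx : ℕ → Jn := fun a => if h : a < L.length then L.get ⟨a, h⟩ else j₀ with hidxdef
        have hidx : ∀ j ∈ γ, ∃ a, idx a = j := by
          intro j hj
          have hjL : j ∈ L := Finset.mem_toList.mpr hj
          obtain ⟨⟨a, ha⟩, hget⟩ := List.mem_iff_get.mp hjL
          exact ⟨a, by simp only [hidxdef, dif_pos ha]; exact hget⟩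
        set A : ℕ → ℕ → Set X :=
          fun a b => if a = 0 then E b else Cf (idx (a - 1)) (q (idx (a - 1))) b with hAdef
        have hA : ∀ a b, A a b ∈ U := by
          intro a b
          by_cases ha : a = 0
          · simpa [hAdef, ha] using hE b
          · simpa [hAdef, ha] using hq (idx (a - 1)) b
        obtain ⟨x, hxS, hx⟩ := star2 A hA
        refine ⟨⟨x, hxS⟩, fun b => by simpa [hAdef] using hx 0 b, ?_⟩
        intro j hj
        obtain ⟨a, rfl⟩ := hidx j hj
        have hxj : ∀ b, x ∈ Cf (idx a) (q (idx a)) b := by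
          intro b
          have := hx (a + 1) b
          simpa [hAdef] using this
        have hmem : (⟨x, hxS⟩ : ↥(S n₀)) ∈
            (Subtype.val ⁻¹' (⋂ b, Cf (idx a) (q (idx a)) b) : Set ↥(S n₀)) := by
          simp only [Set.mem_preimage, Set.mem_iInter]
          exact hxj
        rw [hCfeq (idx a) (q (idx a))] at hmem
        exact hmem
    -- q is in the closure of the range of en
    have hqcl : q ∈ closure (Set.range en) := by
      rw [mem_closure_iff]
      intro V hV hqV
      obtain ⟨I, u, hu, hsub⟩ := isOpen_pi_iff.mp hV q hqV
      obtain ⟨s, -, hs⟩ := Mfin (fun _ => Set.univ) (fun _ => hunivU) I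
      refine ⟨en s, hsub ?_, s, rfl⟩
      intro j hj
      have : en s j = q j := hs j hj
      rw [this]
      exact (hu j hj).2
    have hqrange : q ∈ Set.range en := by
      rw [← hen_closed.closure_eq]
      exact hqcl
    obtain ⟨x₀, hx₀⟩ := hqrange
    -- x₀ realizes all coordinates of p
    have hfinal : ∀ f : C(X, ℕ), f (x₀ : X) = p f := by
      intro f
      by_contra hne
      have hWclop : IsClopen (Subtype.val ⁻¹' (f ⁻¹' {p f}) : Set ↥(S n₀)) :=
        ((isClopen_discrete _).preimage f.continuous).preimage continuous_subtype_val
      have hx₀W : x₀ ∈ (Subtype.val ⁻¹' (f ⁻¹' ({p f} : Set ℕ)))ᶜ := by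
        simpa using hne
      obtain ⟨O, hOopen, hOeq⟩ := hen_emb.toIsInducing.isOpen_iff.mp hWclop.compl.2
      have hqO : q ∈ O := by
        rw [← hx₀]
        have : x₀ ∈ en ⁻¹' O := hOeq.symm ▸ hx₀W
        exact this
      obtain ⟨I, u, hu, hsub⟩ := isOpen_pi_iff.mp hOopen q hqO
      obtain ⟨s, hsE, hs⟩ := Mfin (fun _ => f ⁻¹' {p f}) (fun _ => hFmem f) I
      have hsO : en s ∈ O := by
        apply hsub
        intro j hj
        have : en s j = q j := hs j hj
        rw [this]
        exact (hu j hj).2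
      have hsW : s ∈ (Subtype.val ⁻¹' (f ⁻¹' ({p f} : Set ℕ)))ᶜ := by
        rw [← hOeq]
        exact hsO
      exact hsW (hsE 0)
    exact ⟨(x₀ : X), funext fun f => hfinal f⟩
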